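/- (Basis property in the proof of Theorem 3.) Suppose β̂ > β > 0, c_V > 0, and (β̂ − β)(c_I − c_P) + β c_V γ ≠ 0. Let z = (x_C, x_S, x_R) ∈ ℝ³ satisfy x_S > 0 and 0 < 1 − x_S − x_R. Then the three vectors g_V(z), [g_P, g_V](z), and [f, [g_P, g_V]](z) are linearly independent, hence form a basis of ℝ³. -/

import Mathlib

noncomputable section

/-- Drift vector field of the Mayer-form SIRI dynamics, `z = (x_C, x_S, x_R)`. -/
def fVec (cP cI γ : ℝ) (z : ℝ × ℝ × ℝ) : ℝ × ℝ × ℝ :=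
  (cP * (z.2.1 + z.2.2) + cI * (1 - z.2.1 - z.2.2), 0, γ * (1 - z.2.1 - z.2.2))

/-- Control vector field for the protection input. -/
def gPVec (β βh cP : ℝ) (z : ℝ × ℝ × ℝ) : ℝ × ℝ × ℝ :=
  (-(cP * (z.2.1 + z.2.2)), -(β * z.2.1 * (1 - z.2.1 - z.2.2)),
    -(βh * z.2.2 * (1 - z.2.1 - z.2.2)))

/-- Control vector field for the vaccination input. -/
def gVVec (cV : ℝ) (z : ℝ × ℝ × ℝ) : ℝ × ℝ × ℝ := (cV * z.2.1, -z.2.1, z.2.1)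

/-- Lie bracket of two vector fields on `ℝ³`:
`[X, Y](z) = DY(z) X(z) − DX(z) Y(z)`, where `D` is the Fréchet derivative. -/
def lieBr (X Y : ℝ × ℝ × ℝ → ℝ × ℝ × ℝ) (z : ℝ × ℝ × ℝ) : ℝ × ℝ × ℝ :=
  fderiv ℝ Y z (X z) - fderiv ℝ X z (Y z)

open ContinuousLinearMap

lemma hasF_s (z : ℝ × ℝ × ℝ) :
    HasFDerivAt (fun z : ℝ × ℝ × ℝ => z.2.1)
      ((fst ℝ ℝ ℝ).comp (snd ℝ ℝ (ℝ × ℝ))) z :=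
  hasFDerivAt_fst.comp z hasFDerivAt_snd

lemma hasF_r (z : ℝ × ℝ × ℝ) :
    HasFDerivAt (fun z : ℝ × ℝ × ℝ => z.2.2)
      ((snd ℝ ℝ ℝ).comp (snd ℝ ℝ (ℝ × ℝ))) z :=
  hasFDerivAt_snd.comp z hasFDerivAt_snd

lemma hasF_I (z : ℝ × ℝ × ℝ) :
    HasFDerivAt (fun z : ℝ × ℝ × ℝ => 1 - z.2.1 - z.2.2)
      ((0 : (ℝ × ℝ × ℝ) →L[ℝ] ℝ) - (fst ℝ ℝ ℝ).comp (snd ℝ ℝ (ℝ × ℝ))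
        - (snd ℝ ℝ ℝ).comp (snd ℝ ℝ (ℝ × ℝ))) z :=
  ((hasFDerivAt_const 1 z).sub (hasF_s z)).sub (hasF_r z)

lemma bracket1 (β βh cP cV : ℝ) (z : ℝ × ℝ × ℝ) :
    lieBr (gPVec β βh cP) (gVVec cV) z =
      (-(β * cV * z.2.1 * (1 - z.2.1 - z.2.2)), 0,
        (βh - β) * z.2.1 * (1 - z.2.1 - z.2.2)) := by
  have hV : HasFDerivAt (gVVec cV) _ z :=
    ((hasF_s z).const_mul cV).prodMk (((hasF_s z).neg).prodMk (hasF_s z))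
  have hP : HasFDerivAt (gPVec β βh cP) _ z :=
    (((((hasF_s z).add (hasF_r z)).const_mul cP).neg).prodMk
      (((((hasF_s z).const_mul β).mul (hasF_I z)).neg).prodMk
        ((((hasF_r z).const_mul βh).mul (hasF_I z)).neg)))
  unfold lieBr
  rw [hV.fderiv, hP.fderiv]
  simp [gPVec, gVVec, Prod.ext_iff]
  constructor
  · ring
  constructor
  · ring
  · ring

lemma bracket2 (β βh γ cP cV cI : ℝ) (z : ℝ × ℝ × ℝ) :
    lieBr (fVec cP cI γ) (lieBr (gPVec β βh cP) (gVVec cV)) z =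
      (((βh - β) * (cI - cP) + β * cV * γ) * (z.2.1 * (1 - z.2.1 - z.2.2)), 0, 0) := by
  have hBfun : lieBr (gPVec β βh cP) (gVVec cV) =
      fun z : ℝ × ℝ × ℝ => ((-(β * cV * z.2.1 * (1 - z.2.1 - z.2.2)), 0,
        (βh - β) * z.2.1 * (1 - z.2.1 - z.2.2)) : ℝ × ℝ × ℝ) :=
    funext fun z => bracket1 β βh cP cV z
  have hf : HasFDerivAt (fVec cP cI γ) _ z :=
    ((((hasF_s z).add (hasF_r z)).const_mul cP).add ((hasF_I z).const_mul cI)).prodMk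
      ((hasFDerivAt_const (0:ℝ) z).prodMk ((hasF_I z).const_mul γ))
  rw [hBfun]
  unfold lieBr
  rw [HasFDerivAt.fderiv (f := fun z : ℝ × ℝ × ℝ => ((-(β * cV * z.2.1 * (1 - z.2.1 - z.2.2)), 0,
        (βh - β) * z.2.1 * (1 - z.2.1 - z.2.2)) : ℝ × ℝ × ℝ)) (((((hasF_s z).const_mul (β * cV)).mul (hasF_I z)).neg).prodMk
      ((hasFDerivAt_const (0:ℝ) z).prodMk
        (((hasF_s z).const_mul (βh - β)).mul (hasF_I z)))), hf.fderiv]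
  simp [fVec, Prod.ext_iff]
  constructor <;> ring

/-- basis property in the proof of Theorem 3. -/
theorem siri_bracket_basis
    (β βh γ cP cV cI : ℝ)
    (hβ : 0 < β) (hβhβ : β < βh) (hγ : 0 < γ)
    (hcP : 0 < cP) (hcV : 0 < cV) (hcI : 0 < cI)
    (hden : (βh - β) * (cI - cP) + β * cV * γ ≠ 0)
    (z : ℝ × ℝ × ℝ) (hxS : 0 < z.2.1) (hxI : 0 < 1 - z.2.1 - z.2.2) :
    LinearIndependent ℝ
      ![gVVec cV z, lieBr (gPVec β βh cP) (gVVec cV) z,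
        lieBr (fVec cP cI γ) (lieBr (gPVec β βh cP) (gVVec cV)) z] := by
  rw [bracket1, bracket2]
  rw [Fintype.linearIndependent_iff]
  intro g hg
  rw [Fin.sum_univ_three] at hg
  simp [gVVec, Prod.ext_iff, Prod.smul_mk] at hg
  obtain ⟨h1, h2, h3⟩ := hg
  have hs : z.2.1 ≠ 0 := ne_of_gt hxS
  have hI : (1 - z.2.1 - z.2.2) ≠ 0 := ne_of_gt hxI
  have hb : βh - β ≠ 0 := sub_ne_zero_of_ne (ne_of_gt hβhβ)
  have hg0 : g 0 = 0 := h2.resolve_right hs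
  have hg1 : g 1 = 0 := by
    rw [hg0, zero_mul, zero_add] at h3
    rcases mul_eq_zero.mp h3 with h | h
    · exact h
    · rcases mul_eq_zero.mp h with h | h
      · rcases mul_eq_zero.mp h with h | h
        · exact absurd h hb
        · exact absurd h hs
      · exact absurd h hI
  have hg2 : g 2 = 0 := by
    rw [hg0, hg1] at h1
    have h1' : g 2 * (((βh - β) * (cI - cP) + β * cV * γ) * (z.2.1 * (1 - z.2.1 - z.2.2))) = 0 := by
      linarith
    rcases mul_eq_zero.mp h1' with h | h
    · exact h
    · rcases mul_eq_zero.mp h with h | h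
      · exact absurd h hden
      · rcases mul_eq_zero.mp h with h | h
        · exact absurd h hs
        · exact absurd h hI
  intro i
  fin_cases i
  · exact hg0
  · exact hg1
  · exact hg2
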